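/- If A(z) is a formal power series with constant term 0 satisfying A = z²/2 + zA + A²/2, and B is a formal power series with B(0) = 0 satisfying B = z + zB + A + AB, then B = A', the formal derivative of A. Equivalently, B(z) = 1/√(1-2z) - 1. -/

import Mathlib

open PowerSeries in
/-- If `A` is a formal power series with constant term `0` satisfying `A = z²/2 + zA + A²/2`,
and `B` has constant term `0` and satisfies `B = z + zB + A + AB`, then `B` is the formal
derivative of `A`; equivalently `(1+B)²(1-2z) = 1`, i.e. `B = 1/√(1-2z) - 1`. -/
theorem positive_egf_eq_derivative (A B : PowerSeries ℚ)
    (hA0 : PowerSeries.constantCoeff A = 0)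
    (hA : A = PowerSeries.C (R := ℚ) (1 / 2) * X ^ 2 + X * A + PowerSeries.C (R := ℚ) (1 / 2) * A ^ 2)
    (hB0 : PowerSeries.constantCoeff B = 0)
    (hB : B = X + X * B + A + A * B) :
    B = PowerSeries.derivative ℚ A ∧ (1 + B) ^ 2 * (1 - 2 * X) = 1 := by
  have h2 : (PowerSeries.C (R := ℚ)) (1/2) * 2 = 1 := by
    rw [show (2 : PowerSeries ℚ) = PowerSeries.C (R := ℚ) 2 from (map_ofNat _ 2).symm, ← map_mul]
    norm_num
  have eqB : (1 + B) * (1 - X - A) = 1 := by linear_combination hB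
  have hU : (1 - X - A : PowerSeries ℚ) ≠ 0 := by
    intro h
    have := congrArg (PowerSeries.constantCoeff (R := ℚ)) h
    simp [hA0] at this
  have hd := congrArg (PowerSeries.derivative ℚ) hA
  simp only [map_add, Derivation.leibniz, Derivation.leibniz_pow, PowerSeries.derivative_X,
    PowerSeries.derivative_C, smul_eq_mul, mul_one, mul_zero, zero_mul, add_zero, zero_add,
    smul_smul, nsmul_eq_mul] at hd
  norm_num at hd
  have eqA : PowerSeries.derivative ℚ A * (1 - X - A) = X + A := by
    linear_combination hd + (X + A * (PowerSeries.derivative ℚ A)) * h2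
  have hU2 : (1 - X - A : PowerSeries ℚ)^2 = 1 - 2*X := by
    linear_combination (-2 : PowerSeries ℚ)*hA - (X^2 + A^2)*h2
  constructor
  · apply mul_right_cancel₀ hU
    rw [eqA]
    linear_combination eqB
  · linear_combination ((1 + B)*(1 - X - A) + 1)*eqB - (1+B)^2 * hU2
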